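/- If n ≡ 3 (mod 4), then every (1,1)-design C ⊆ F_2^n satisfies |C| ≥ n + 1. -/

import Mathlib

open Finset

/-- The Krawtchouk polynomials `Q_i^{(n)}(t)`, determined by `Q_0 = 1`, `Q_1 = t` and the
three-term recurrence `n·t·Q_i(t) = (n−i)·Q_{i+1}(t) + i·Q_{i−1}(t)`. -/
noncomputable def kraw (n : ℕ) : ℕ → ℝ → ℝ
  | 0, _ => 1
  | 1, t => t
  | (i+2), t =>
      ((n : ℝ) * t * kraw n (i+1) t - ((i : ℝ) + 1) * kraw n i t) / ((n : ℝ) - ((i : ℝ) + 1))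

/-- The "inner product" `⟨x,y⟩ = 1 − 2 d(x,y)/n`. -/
noncomputable def ip (n : ℕ) (x y : Fin n → ZMod 2) : ℝ :=
  1 - 2 * (hammingDist x y : ℝ) / (n : ℝ)

/-- The `i`-th moment `M_i(C) = ∑_{x,y ∈ C} Q_i^{(n)}(⟨x,y⟩)`. -/
noncomputable def moment (n : ℕ) (C : Finset (Fin n → ZMod 2)) (i : ℕ) : ℝ :=
  ∑ x ∈ C, ∑ y ∈ C, kraw n i (ip n x y)

/-- The antipodal (complement) point `−x`. -/
def antip {n : ℕ} (x : Fin n → ZMod 2) : Fin n → ZMod 2 := fun j => x j + 1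

/-- `C` is a `(k,k)`-design: a nonempty code with `M_i(C) = 0` for all even `i` with `2 ≤ i ≤ 2k`. -/
def IsKKDesign (n k : ℕ) (C : Finset (Fin n → ZMod 2)) : Prop :=
  C.Nonempty ∧ ∀ j : ℕ, 1 ≤ j → j ≤ k → moment n C (2 * j) = 0

/-- `C` is an `m`-design: a nonempty code with `M_i(C) = 0` for all `1 ≤ i ≤ m`. -/
def IsMDesign (n m : ℕ) (C : Finset (Fin n → ZMod 2)) : Prop :=
  C.Nonempty ∧ ∀ i : ℕ, 1 ≤ i → i ≤ m → moment n C i = 0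

/-- Generalized binomial coefficient `C(z,j)` for real `z`. -/
noncomputable def gchoose (z : ℝ) (j : ℕ) : ℝ :=
  (∏ i ∈ Finset.range j, (z - (i : ℝ))) / (Nat.factorial j : ℝ)

/-- The Krawtchouk polynomial `K_i^{(m)}(z)` in the variable `z`. -/
noncomputable def krawK (m i : ℕ) (z : ℝ) : ℝ :=
  ∑ j ∈ Finset.range (i + 1), (-1 : ℝ) ^ j * gchoose z j * gchoose ((m : ℝ) - z) (i - j)

/-- The adjacent polynomial `Q_i^{1,1}(t) = K_i^{(n−2)}(n(1−t)/2 − 1) / ∑_{j=0}^i C(n−1,j)`. -/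
noncomputable def Q11 (n i : ℕ) (t : ℝ) : ℝ :=
  krawK (n - 2) i ((n : ℝ) * (1 - t) / 2 - 1) /
    (∑ j ∈ Finset.range (i + 1), ((n - 1).choose j : ℝ))

/-- for `n ≡ 3 (mod 4)` every `(1,1)`-design has at least `n + 1` points. -/
noncomputable def sgn {n : ℕ} (x : Fin n → ZMod 2) (j : Fin n) : ℝ :=
  if x j = 0 then 1 else -1

lemma zmod2_cases (a : ZMod 2) : a = 0 ∨ a = 1 := by revert a; decide

lemma sgn_mul_self {n : ℕ} (x : Fin n → ZMod 2) (j : Fin n) : sgn x j * sgn x j = 1 := by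
  unfold sgn; rcases zmod2_cases (x j) with h | h <;> simp [h]

lemma sgn_mul {n : ℕ} (x y : Fin n → ZMod 2) (j : Fin n) :
    sgn x j * sgn y j = if x j = y j then 1 else -1 := by
  unfold sgn
  rcases zmod2_cases (x j) with h | h <;> rcases zmod2_cases (y j) with h' | h' <;>
    simp [h, h']

lemma sgn_cases {n : ℕ} (x : Fin n → ZMod 2) (j k : Fin n) :
    sgn x j * sgn x k = 1 ∨ sgn x j * sgn x k = -1 := by
  unfold sgn
  rcases zmod2_cases (x j) with h | h <;> rcases zmod2_cases (x k) with h' | h' <;>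
    simp [h, h']

lemma kraw_two (n : ℕ) (t : ℝ) : kraw n 2 t = ((n:ℝ) * t * t - 1) / ((n:ℝ) - 1) := by
  show ((n : ℝ) * t * kraw n 1 t - (((0:ℕ) : ℝ) + 1) * kraw n 0 t) / ((n : ℝ) - (((0:ℕ) : ℝ) + 1)) = _
  simp [kraw]

lemma sum_sgn (n : ℕ) (x y : Fin n → ZMod 2) :
    ∑ j, sgn x j * sgn y j = (n : ℝ) - 2 * (hammingDist x y : ℝ) := by
  have : ∀ j, sgn x j * sgn y j = 1 - 2 * (if x j ≠ y j then (1:ℝ) else 0) := by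
    intro j; rw [sgn_mul]; by_cases h : x j = y j <;> simp [h] <;> norm_num
  rw [Finset.sum_congr rfl fun j _ => this j]
  rw [Finset.sum_sub_distrib]
  rw [← Finset.mul_sum, Finset.sum_boole]
  simp [hammingDist, Finset.filter_ne]

theorem stmt_15 (n : ℕ) (hn : 2 ≤ n) (hmod : n % 4 = 3)
    (C : Finset (Fin n → ZMod 2)) (hC : C.Nonempty) (hdes : moment n C 2 = 0) :
    n + 1 ≤ C.card := by
  set c : ℝ := (C.card : ℝ) with hc
  have hnpos : (0:ℝ) < (n:ℝ) := by exact_mod_cast lt_of_lt_of_le (by norm_num) hn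
  have hn1 : (n:ℝ) - 1 ≠ 0 := by
    have : (1:ℝ) < (n:ℝ) := by exact_mod_cast lt_of_lt_of_le (by norm_num) hn
    linarith
  have hcpos : (0:ℝ) < c := by
    rw [hc]; exact_mod_cast Finset.card_pos.mpr hC
  -- A : n * ip = sum of sign products
  have hA : ∀ x y : Fin n → ZMod 2, (n:ℝ) * ip n x y = ∑ j, sgn x j * sgn y j := by
    intro x y
    rw [sum_sgn]
    unfold ip
    field_simp
  set S : Fin n → Fin n → ℝ := fun j k => ∑ x ∈ C, sgn x j * sgn x k with hSdef
  -- B : quadruple sum identity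
  have hB : ∑ x ∈ C, ∑ y ∈ C, ((n:ℝ) * ip n x y) ^ 2 = ∑ j, ∑ k, S j k * S j k := by
    have h1 : ∀ x y : Fin n → ZMod 2,
        ((n:ℝ) * ip n x y) ^ 2
          = ∑ j : Fin n, ∑ k : Fin n, (sgn x j * sgn x k) * (sgn y j * sgn y k) := by
      intro x y
      rw [sq, hA x y, Finset.sum_mul_sum]
      exact Finset.sum_congr rfl fun j _ => Finset.sum_congr rfl fun k _ => by ring
    have h2 : ∀ j k : Fin n,
        S j k * S j k = ∑ x ∈ C, ∑ y ∈ C, (sgn x j * sgn x k) * (sgn y j * sgn y k) := by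
      intro j k
      simp only [hSdef]
      rw [Finset.sum_mul_sum]
    simp_rw [h1, h2]
    calc ∑ x ∈ C, ∑ y ∈ C, ∑ j : Fin n, ∑ k : Fin n,
            (sgn x j * sgn x k) * (sgn y j * sgn y k)
        = ∑ x ∈ C, ∑ j : Fin n, ∑ y ∈ C, ∑ k : Fin n,
            (sgn x j * sgn x k) * (sgn y j * sgn y k) :=
          Finset.sum_congr rfl fun x _ => Finset.sum_comm
      _ = ∑ j : Fin n, ∑ x ∈ C, ∑ y ∈ C, ∑ k : Fin n,
            (sgn x j * sgn x k) * (sgn y j * sgn y k) := Finset.sum_comm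
      _ = ∑ j : Fin n, ∑ x ∈ C, ∑ k : Fin n, ∑ y ∈ C,
            (sgn x j * sgn x k) * (sgn y j * sgn y k) :=
          Finset.sum_congr rfl fun j _ => Finset.sum_congr rfl fun x _ => Finset.sum_comm
      _ = ∑ j : Fin n, ∑ k : Fin n, ∑ x ∈ C, ∑ y ∈ C,
            (sgn x j * sgn x k) * (sgn y j * sgn y k) :=
          Finset.sum_congr rfl fun j _ => Finset.sum_comm
  -- C : from the design hypothesis
  have h0 : ∑ x ∈ C, ∑ y ∈ C, ((n:ℝ) * ip n x y * ip n x y - 1) = 0 := by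
    unfold moment at hdes
    simp_rw [kraw_two, ← Finset.sum_div] at hdes
    rcases div_eq_zero_iff.mp hdes with h | h
    · exact h
    · exact absurd h hn1
  have hsum1 : ∑ x ∈ C, ∑ y ∈ C, ((n:ℝ) * ip n x y * ip n x y) = c * c := by
    have := h0
    simp_rw [Finset.sum_sub_distrib, Finset.sum_const, nsmul_eq_mul, mul_one] at this
    rw [hc]
    linarith [this]
  have hmain : ∑ j : Fin n, ∑ k : Fin n, S j k * S j k = (n:ℝ) * (c * c) := by
    rw [← hB]
    calc ∑ x ∈ C, ∑ y ∈ C, ((n:ℝ) * ip n x y) ^ 2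
        = (n:ℝ) * ∑ x ∈ C, ∑ y ∈ C, ((n:ℝ) * ip n x y * ip n x y) := by
          rw [Finset.mul_sum]
          exact Finset.sum_congr rfl fun x _ => by
            rw [Finset.mul_sum]; exact Finset.sum_congr rfl fun y _ => by ring
      _ = (n:ℝ) * (c * c) := by rw [hsum1]
  -- diagonal
  have hdiag : ∀ j : Fin n, S j j = c := by
    intro j
    simp only [hSdef]
    rw [Finset.sum_congr rfl fun x _ => sgn_mul_self x j, Finset.sum_const, nsmul_eq_mul,
      mul_one, hc]
  -- off-diagonal vanishes
  have hoffsum : ∑ j : Fin n, ∑ k ∈ Finset.univ.erase j, S j k * S j k = 0 := by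
    have hsplit : ∑ j : Fin n, ∑ k : Fin n, S j k * S j k
        = (∑ j : Fin n, S j j * S j j) + ∑ j : Fin n, ∑ k ∈ Finset.univ.erase j, S j k * S j k := by
      rw [← Finset.sum_add_distrib]
      exact Finset.sum_congr rfl fun j _ => (Finset.add_sum_erase _ _ (Finset.mem_univ j)).symm
    have hdiagsum : ∑ j : Fin n, S j j * S j j = (n:ℝ) * (c * c) := by
      rw [Finset.sum_congr rfl fun j _ => by rw [hdiag j]]
      simp [Finset.card_univ]
    rw [hmain, hdiagsum] at hsplit
    linarith
  have hS0 : ∀ j k : Fin n, j ≠ k → S j k = 0 := by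
    intro j k hjk
    have h1 := (Finset.sum_eq_zero_iff_of_nonneg (fun j _ =>
      Finset.sum_nonneg fun k _ => mul_self_nonneg _)).mp hoffsum j (Finset.mem_univ j)
    have h2 := (Finset.sum_eq_zero_iff_of_nonneg (fun k _ => mul_self_nonneg _)).mp h1 k
      (Finset.mem_erase.mpr ⟨hjk.symm, Finset.mem_univ k⟩)
    exact mul_self_eq_zero.mp h2
  -- parity : C.card is even
  have hcard_even : ∃ m, C.card = 2 * m := by
    set j0 : Fin n := ⟨0, by omega⟩
    set j1 : Fin n := ⟨1, by omega⟩
    have hne : j0 ≠ j1 := by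
      intro h
      have := congrArg Fin.val h
      simp [j0, j1] at this
    have hz := hS0 j0 j1 hne
    set P := C.filter (fun x => sgn x j0 * sgn x j1 = 1) with hP
    set Q := C.filter (fun x => ¬ (sgn x j0 * sgn x j1 = 1)) with hQ
    have hsplit : S j0 j1 = (P.card : ℝ) - (Q.card : ℝ) := by
      simp only [hSdef]
      rw [show (∑ x ∈ C, sgn x j0 * sgn x j1)
          = ∑ x ∈ P, sgn x j0 * sgn x j1 + ∑ x ∈ Q, sgn x j0 * sgn x j1 from
        (Finset.sum_filter_add_sum_filter_not C _ _).symm]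
      have h1 : ∑ x ∈ P, sgn x j0 * sgn x j1 = (P.card : ℝ) := by
        rw [Finset.sum_congr rfl fun x hx => (Finset.mem_filter.mp hx).2]
        simp
        rfl
      have h2 : ∑ x ∈ Q, sgn x j0 * sgn x j1 = -(Q.card : ℝ) := by
        have hneg : ∀ x ∈ Q, sgn x j0 * sgn x j1 = -1 := by
          intro x hx
          rcases sgn_cases x j0 j1 with h | h
          · exact absurd h (Finset.mem_filter.mp hx).2
          · exact h
        rw [Finset.sum_congr rfl hneg]
        simp
      rw [h1, h2]
      ring
    rw [hz] at hsplit
    have hPQ : P.card = Q.card := by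
      have : (P.card : ℝ) = (Q.card : ℝ) := by linarith
      exact_mod_cast this
    have htot : P.card + Q.card = C.card :=
      Finset.card_filter_add_card_filter_not _
    exact ⟨P.card, by omega⟩
  -- rank bound : n ≤ C.card
  have hrank : n ≤ C.card := by
    have hli : LinearIndependent ℝ (fun j : Fin n => fun x : ↥C => sgn (x : Fin n → ZMod 2) j) := by
      rw [Fintype.linearIndependent_iff]
      intro g hg k
      have hx : ∀ x ∈ C, ∑ j, g j * sgn x j = 0 := by
        intro x hxC
        have := congrFun hg ⟨x, hxC⟩
        simpa using this
      have h1 : ∑ x ∈ C, (∑ j, g j * sgn x j) * sgn x k = 0 :=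
        Finset.sum_eq_zero fun x hxC => by rw [hx x hxC, zero_mul]
      have h2 : ∑ x ∈ C, (∑ j, g j * sgn x j) * sgn x k = g k * c := by
        simp_rw [Finset.sum_mul]
        rw [Finset.sum_comm]
        have hj : ∀ j : Fin n, ∑ x ∈ C, g j * sgn x j * sgn x k = g j * S j k := by
          intro j
          simp only [hSdef]
          rw [Finset.mul_sum]
          exact Finset.sum_congr rfl fun x _ => by ring
        rw [Finset.sum_congr rfl fun j _ => hj j]
        rw [Finset.sum_eq_single k]
        · rw [hdiag k]
        · intro j _ hjk; rw [hS0 j k hjk, mul_zero]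
        · intro h; exact absurd (Finset.mem_univ k) h
      rw [h1] at h2
      rcases mul_eq_zero.mp h2.symm with h | h
      · exact h
      · exact absurd h (ne_of_gt hcpos)
    have := hli.fintype_card_le_finrank
    simpa [Module.finrank_fintype_fun_eq_card, Fintype.card_coe] using this
  obtain ⟨m, hm⟩ := hcard_even
  omega
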